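/- Let Υ be a δ-hyperbolic geodesic space and m, ε > 0, c ≥ 0. There exists ε′ (depending only on δ, m, ε, c) so that for any finite or countable collection of subsets {X_i}_{i=1}^Λ of Υ satisfying (1) each X_i is ε-quasi-convex, (2) X_i ∩ X_{i+1} ≠ ∅ for each i, and (3) for all i, j and all x ∈ X_i, y ∈ X_j one has d(x,y) ≥ m(|i − j| − c), the union ⋃_i X_i is ε′-quasi-convex. In particular ε′ does not depend on Λ. -/

import Mathlib

/-- A geodesic from `x` to `y`, parametrized by arclength on `[0, dist x y]`. -/
def IsGeodesicFrom {X : Type*} [MetricSpace X] (γ : ℝ → X) (x y : X) : Prop :=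
  γ 0 = x ∧ γ (dist x y) = y ∧
    ∀ s ∈ Set.Icc (0:ℝ) (dist x y), ∀ t ∈ Set.Icc (0:ℝ) (dist x y),
      dist (γ s) (γ t) = |s - t|

/-- The image of a geodesic segment. -/
def geodSeg {X : Type*} [MetricSpace X] (γ : ℝ → X) (x y : X) : Set X :=
  γ '' Set.Icc (0:ℝ) (dist x y)

/-- A geodesic metric space. -/
def GeodesicSpace (X : Type*) [MetricSpace X] : Prop :=
  ∀ x y : X, ∃ γ : ℝ → X, IsGeodesicFrom γ x y

/-- `δ`-hyperbolicity via thin triangles. -/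
def DeltaHyperbolic (X : Type*) [MetricSpace X] (δ : ℝ) : Prop :=
  ∀ (x y z : X) (γ₁ γ₂ γ₃ : ℝ → X),
    IsGeodesicFrom γ₁ x y → IsGeodesicFrom γ₂ y z → IsGeodesicFrom γ₃ x z →
    ∀ p ∈ geodSeg γ₃ x z, ∃ q ∈ geodSeg γ₁ x y ∪ geodSeg γ₂ y z, dist p q ≤ δ

/-- `ε`-quasi-convexity of a subset. -/
def QuasiConvexSet {X : Type*} [MetricSpace X] (ε : ℝ) (P : Set X) : Prop :=
  ∀ x ∈ P, ∀ y ∈ P, ∀ γ : ℝ → X, IsGeodesicFrom γ x y →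
    ∀ p ∈ geodSeg γ x y, ∃ q ∈ P, dist p q ≤ ε


namespace ChainAux

open Metric Set

variable {Υ : Type*} [MetricSpace Υ]

lemma reverse_isGeodesic {γ : ℝ → Υ} {x y : Υ} (h : IsGeodesicFrom γ x y) :
    IsGeodesicFrom (fun t => γ (dist x y - t)) y x := by
  obtain ⟨h0, h1, hiso⟩ := h
  have hd : dist y x = dist x y := dist_comm y x
  refine ⟨by simpa using h1, by simp [hd, h0], ?_⟩
  intro s hs t ht
  rw [hd] at hs ht
  have hs' : dist x y - s ∈ Set.Icc (0:ℝ) (dist x y) :=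
    ⟨by linarith [hs.2], by linarith [hs.1]⟩
  have ht' : dist x y - t ∈ Set.Icc (0:ℝ) (dist x y) :=
    ⟨by linarith [ht.2], by linarith [ht.1]⟩
  rw [hiso _ hs' _ ht']
  rw [abs_sub_comm]
  congr 1
  ring

lemma reverse_mem_seg {γ : ℝ → Υ} {x y : Υ} (h : IsGeodesicFrom γ x y) {p : Υ}
    (hp : p ∈ geodSeg γ x y) : p ∈ geodSeg (fun t => γ (dist x y - t)) y x := by
  obtain ⟨s, hs, rfl⟩ := hp
  refine ⟨dist x y - s, ?_, ?_⟩
  · rw [dist_comm]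
    exact ⟨by linarith [hs.2], by linarith [hs.1]⟩
  · simp

lemma sq_le_two_pow (L : ℕ) : L ^ 2 ≤ 2 ^ (L + 2) := by
  induction L with
  | zero => norm_num
  | succ L IH =>
    have h1 : L < 2 ^ L := Nat.lt_two_pow_self
    have e1 : 2 ^ (L + 2) = 4 * 2 ^ L := by ring
    have e2 : 2 ^ (L + 1 + 2) = 8 * 2 ^ L := by ring
    rw [e1] at IH
    rw [e2]
    nlinarith

lemma exists_L0 (a b : ℝ) : ∃ L0 : ℕ, ∀ L : ℕ, L0 ≤ L → a * L + b < 2 ^ L := by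
  refine ⟨⌈4 * (|a| + |b| + 1)⌉₊ + 4, fun L hL => ?_⟩
  have hL4 : 4 ≤ L := by omega
  have hL1 : (1:ℝ) ≤ L := by exact_mod_cast (by omega : 1 ≤ L)
  have h1 : 4 * (|a| + |b| + 1) ≤ (L:ℝ) := by
    calc 4 * (|a| + |b| + 1) ≤ (⌈4 * (|a| + |b| + 1)⌉₊ : ℝ) := Nat.le_ceil _
      _ ≤ (L:ℝ) := by exact_mod_cast le_trans (Nat.le_add_right _ 4) hL
  have hsq : ((L:ℝ)) ^ 2 ≤ 2 ^ (L + 2) := by exact_mod_cast sq_le_two_pow L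
  have h2 : (2:ℝ) ^ (L + 2) = 4 * 2 ^ L := by ring
  have h3 : (L:ℝ) ^ 2 / 4 ≤ 2 ^ L := by rw [h2] at hsq; linarith
  have h4 : a * L + b < (|a| + |b| + 1) * L := by
    have := le_abs_self a
    have := le_abs_self b
    have h5 : a * L ≤ |a| * L := mul_le_mul_of_nonneg_right (le_abs_self a) (by positivity)
    have h6 : |b| ≤ |b| * L := le_mul_of_one_le_right (abs_nonneg b) hL1
    nlinarith
  have h7 : (|a| + |b| + 1) * L ≤ (L:ℝ) ^ 2 / 4 := by nlinarith [abs_nonneg a, abs_nonneg b]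
  linarith

lemma log_step {g : ℕ} (hg : 1 ≤ g) :
    Nat.log 2 (2 * (g / 2)) + 1 ≤ Nat.log 2 (2 * g) := by
  by_cases h0 : g / 2 = 0
  · rw [h0, Nat.mul_zero, Nat.log_zero_right]
    exact Nat.log_pos (by norm_num) (by omega)
  · have := Nat.log_mul_base (b := 2) (n := 2 * (g / 2)) (by norm_num) (by omega)
    rw [← this]
    exact Nat.log_mono_right (by omega)

lemma chainlog (δ' ε : ℝ) (hε : 0 ≤ ε) (hδ' : 0 ≤ δ')
    (hgeo : GeodesicSpace Υ) (hhyp : DeltaHyperbolic Υ δ')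
    (Λ : ℕ∞) (Xs : ℕ → Set Υ)
    (hX : ∀ i : ℕ, 1 ≤ i → (i : ℕ∞) ≤ Λ → QuasiConvexSet ε (Xs i))
    (hcons : ∀ i : ℕ, 1 ≤ i → ((i + 1 : ℕ) : ℕ∞) ≤ Λ → (Xs i ∩ Xs (i + 1)).Nonempty) :
    ∀ g i j : ℕ, 1 ≤ i → i ≤ j → (j : ℕ∞) ≤ Λ → j - i ≤ g →
      ∀ x ∈ Xs i, ∀ y ∈ Xs j, ∀ γ : ℝ → Υ, IsGeodesicFrom γ x y →
      ∀ p ∈ geodSeg γ x y,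
      ∃ k : ℕ, 1 ≤ k ∧ (k : ℕ∞) ≤ Λ ∧ ∃ q ∈ Xs k,
        dist p q ≤ ε + δ' * ((Nat.log 2 (2 * g) : ℝ) + 1) := by
  intro g
  induction g using Nat.strong_induction_on with
  | _ g IH =>
    intro i j hi hij hjΛ hgap x hx y hy γ hγ p hp
    have hiΛ : (i : ℕ∞) ≤ Λ := le_trans (by exact_mod_cast hij) hjΛ
    rcases eq_or_lt_of_le hij with rfl | hlt
    · obtain ⟨q, hq, hdq⟩ := hX i hi hiΛ x hx y hy γ hγ p hp
      refine ⟨i, hi, hiΛ, q, hq, le_trans hdq ?_⟩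
      have : (0:ℝ) ≤ (Nat.log 2 (2 * g) : ℝ) + 1 := by positivity
      nlinarith
    · have hg1 : 1 ≤ g := le_trans (by omega) hgap
      set k := i + (j - i) / 2 with hk
      have hki : i ≤ k := Nat.le_add_right _ _
      have hkj : k + 1 ≤ j := by omega
      have hk1 : 1 ≤ k := le_trans hi hki
      have hkΛ : ((k + 1 : ℕ) : ℕ∞) ≤ Λ := le_trans (by exact_mod_cast hkj) hjΛ
      obtain ⟨z, hzk, hzk1⟩ := hcons k hk1 hkΛ
      obtain ⟨γ₁, hγ₁⟩ := hgeo x z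
      obtain ⟨γ₂, hγ₂⟩ := hgeo z y
      obtain ⟨q₁, hq₁mem, hq₁d⟩ := hhyp x z y γ₁ γ₂ γ hγ₁ hγ₂ hγ p hp
      have hstep : (Nat.log 2 (2 * (g / 2)) : ℝ) + 1 ≤ (Nat.log 2 (2 * g) : ℝ) := by
        exact_mod_cast log_step hg1
      have hglt : g / 2 < g := Nat.div_lt_self (by omega) (by norm_num)
      rcases hq₁mem with hq₁m | hq₁m
      · have hkΛ' : (k : ℕ∞) ≤ Λ := le_trans (by exact_mod_cast (by omega : k ≤ j)) hjΛ
        obtain ⟨k', h1, h2, q, hq, hdq⟩ :=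
          IH (g / 2) hglt i k hi hki hkΛ' (by omega) x hx z hzk γ₁ hγ₁ q₁ hq₁m
        refine ⟨k', h1, h2, q, hq, ?_⟩
        calc dist p q ≤ dist p q₁ + dist q₁ q := dist_triangle _ _ _
          _ ≤ δ' + (ε + δ' * ((Nat.log 2 (2 * (g / 2)) : ℝ) + 1)) := by linarith
          _ ≤ ε + δ' * ((Nat.log 2 (2 * g) : ℝ) + 1) := by nlinarith
      · obtain ⟨k', h1, h2, q, hq, hdq⟩ :=
          IH (g / 2) hglt (k + 1) j (by omega) hkj hjΛ (by omega) z hzk1 y hy γ₂ hγ₂ q₁ hq₁m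
        refine ⟨k', h1, h2, q, hq, ?_⟩
        calc dist p q ≤ dist p q₁ + dist q₁ q := dist_triangle _ _ _
          _ ≤ δ' + (ε + δ' * ((Nat.log 2 (2 * (g / 2)) : ℝ) + 1)) := by linarith
          _ ≤ ε + δ' * ((Nat.log 2 (2 * g) : ℝ) + 1) := by nlinarith

end ChainAux

open Metric Set

set_option maxHeartbeats 1000000 in
theorem union_of_progressing_chain_quasiconvex
    {Υ : Type*} [MetricSpace Υ] (δ m ε c : ℝ)
    (hδ : 0 ≤ δ) (hm : 0 < m) (hε : 0 < ε) (hc : 0 ≤ c)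
    (hgeo : GeodesicSpace Υ) (hhyp : DeltaHyperbolic Υ δ) :
    ∃ ε' : ℝ, ∀ (Λ : ℕ∞) (Xs : ℕ → Set Υ),
      (∀ i : ℕ, 1 ≤ i → (i : ℕ∞) ≤ Λ → QuasiConvexSet ε (Xs i)) →
      (∀ i : ℕ, 1 ≤ i → ((i + 1 : ℕ) : ℕ∞) ≤ Λ → (Xs i ∩ Xs (i + 1)).Nonempty) →
      (∀ i j : ℕ, 1 ≤ i → (i : ℕ∞) ≤ Λ → 1 ≤ j → (j : ℕ∞) ≤ Λ →
        ∀ x ∈ Xs i, ∀ y ∈ Xs j, m * (|(i : ℝ) - (j : ℝ)| - c) ≤ dist x y) →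
      QuasiConvexSet ε' (⋃ i ∈ {i : ℕ | 1 ≤ i ∧ (i : ℕ∞) ≤ Λ}, Xs i) := by
  classical
  set δ' := δ + 1 with hδ'def
  have hδ'0 : (0:ℝ) ≤ δ' := by rw [hδ'def]; linarith
  have hδ'1 : (1:ℝ) ≤ δ' := by rw [hδ'def]; linarith
  have hhyp' : DeltaHyperbolic Υ δ' := by
    intro x y z γ₁ γ₂ γ₃ h1 h2 h3 p hp
    obtain ⟨q, hq, hd⟩ := hhyp x y z γ₁ γ₂ γ₃ h1 h2 h3 p hp
    exact ⟨q, hq, by rw [hδ'def]; linarith⟩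
  obtain ⟨L0, hL0⟩ := ChainAux.exists_L0 (12 * δ' / m)
    (2 * c + 4 / m + (12 / m) * (2 * δ' + ε + δ'))
  set C : ℝ := 2 * δ' + ε + δ' * (L0 + 1) with hCdef
  refine ⟨max (2 * δ' + 1) C + 1, ?_⟩
  intro Λ Xs hX hcons hprog
  intro x₀ hxU₀ y₀ hyU₀ γ₀ hγ₀ p₀ hp₀
  set U := ⋃ i ∈ {i : ℕ | 1 ≤ i ∧ (i : ℕ∞) ≤ Λ}, Xs i with hUdef
  have hmemU : ∀ k : ℕ, 1 ≤ k → (k : ℕ∞) ≤ Λ → ∀ q ∈ Xs k, q ∈ U := by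
    intro k h1 h2 q hq
    rw [hUdef]
    exact Set.mem_biUnion ⟨h1, h2⟩ hq
  have hmemU' : ∀ w ∈ U, ∃ k : ℕ, 1 ≤ k ∧ (k : ℕ∞) ≤ Λ ∧ w ∈ Xs k := by
    intro w hw
    rw [hUdef] at hw
    simp only [Set.mem_iUnion, Set.mem_setOf_eq] at hw
    obtain ⟨k, ⟨h1, h2⟩, h3⟩ := hw
    exact ⟨k, h1, h2, h3⟩
  have key : ∀ i j : ℕ, 1 ≤ i → i ≤ j → (i : ℕ∞) ≤ Λ → (j : ℕ∞) ≤ Λ →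
      ∀ x ∈ Xs i, ∀ y ∈ Xs j, ∀ γ : ℝ → Υ, IsGeodesicFrom γ x y →
      ∀ p ∈ geodSeg γ x y, ∃ q ∈ U, dist p q ≤ max (2 * δ' + 1) C + 1 := by
    intro i j hi1 hij hiΛ hjΛ x hx y hy γ hγ p hp
    have hj1 : 1 ≤ j := le_trans hi1 hij
    have hxUm : x ∈ U := hmemU i hi1 hiΛ x hx
    have hyUm : y ∈ U := hmemU j hj1 hjΛ y hy
    have hUne : U.Nonempty := ⟨x, hxUm⟩
    set d := dist x y with hddef
    have hd0 : (0:ℝ) ≤ d := dist_nonneg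
    have hcont : ContinuousOn (fun t => infDist (γ t) U) (Set.Icc (0:ℝ) d) := by
      refine LipschitzOnWith.continuousOn (K := 1) (LipschitzOnWith.of_dist_le_mul ?_)
      intro s hs t ht
      have hst := hγ.2.2 s hs t ht
      have h1 : infDist (γ s) U ≤ infDist (γ t) U + dist (γ s) (γ t) :=
        infDist_le_infDist_add_dist
      have h2 : infDist (γ t) U ≤ infDist (γ s) U + dist (γ t) (γ s) :=
        infDist_le_infDist_add_dist
      rw [dist_comm (γ t) (γ s)] at h2
      rw [hst] at h1 h2
      rw [NNReal.coe_one, one_mul, Real.dist_eq, Real.dist_eq, abs_sub_le_iff]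
      constructor
      · linarith [le_abs_self (s - t)]
      · linarith [neg_abs_le (s - t), abs_sub_comm s t, le_abs_self (t - s)]
    obtain ⟨tstar, htmem, htmax⟩ :=
      isCompact_Icc.exists_isMaxOn (Set.nonempty_Icc.mpr hd0) hcont
    rw [isMaxOn_iff] at htmax
    set S := infDist (γ tstar) U with hSdef
    have hS0 : (0:ℝ) ≤ S := infDist_nonneg
    obtain ⟨s, hs, rfl⟩ := hp
    have hfs : infDist (γ s) U ≤ S := htmax s hs
    suffices hS : S ≤ max (2 * δ' + 1) C by
      have hlt : infDist (γ s) U < max (2 * δ' + 1) C + 1 := by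
        have := lt_add_one (max (2 * δ' + 1) C); linarith
      obtain ⟨q, hqU, hq⟩ := (infDist_lt_iff hUne).mp hlt
      exact ⟨q, hqU, hq.le⟩
    by_contra hScon
    push_neg at hScon
    have hS1 : 2 * δ' + 1 < S := (le_max_left _ _).trans_lt hScon
    have hSC : C < S := (le_max_right _ _).trans_lt hScon
    set a := max 0 (tstar - 2 * S) with hadef
    set b := min d (tstar + 2 * S) with hbdef
    have ht0 : (0:ℝ) ≤ tstar := htmem.1
    have htd : tstar ≤ d := htmem.2
    have hat : a ≤ tstar := max_le ht0 (by linarith)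
    have htb : tstar ≤ b := le_min htd (by linarith)
    have haIcc : a ∈ Set.Icc (0:ℝ) d := ⟨le_max_left _ _, hat.trans htd⟩
    have hbIcc : b ∈ Set.Icc (0:ℝ) d := ⟨ht0.trans htb, min_le_left _ _⟩
    have hba : b - a ≤ 4 * S := by
      have h1 : tstar - 2 * S ≤ a := le_max_right _ _
      have h2 : b ≤ tstar + 2 * S := min_le_right _ _
      linarith
    have hSmaxdist : ∀ w ∈ U, S ≤ dist (γ tstar) w := by
      intro w hw
      rw [hSdef]
      exact infDist_le_dist_of_mem hw
    -- the point near γ a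
    have hu : ∃ k1 : ℕ, 1 ≤ k1 ∧ (k1 : ℕ∞) ≤ Λ ∧ ∃ x' ∈ Xs k1,
        dist (γ a) x' ≤ S + 1 ∧ S - 1 + dist (γ a) x' ≤ dist (γ tstar) (γ a) := by
      rcases le_or_gt 0 (tstar - 2 * S) with hca | hca
      · have hae : a = tstar - 2 * S := max_eq_right hca
        have hdpu : dist (γ tstar) (γ a) = 2 * S := by
          rw [hγ.2.2 tstar htmem a haIcc, hae,
            show tstar - (tstar - 2 * S) = 2 * S by ring, abs_of_nonneg (by linarith)]
        have hfa : infDist (γ a) U < S + 1 := lt_of_le_of_lt (htmax a haIcc) (by linarith)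
        obtain ⟨x', hx'U, hx'd⟩ := (infDist_lt_iff hUne).mp hfa
        obtain ⟨k1, hk11, hk1Λ, hk1m⟩ := hmemU' x' hx'U
        exact ⟨k1, hk11, hk1Λ, x', hk1m, hx'd.le, by rw [hdpu]; linarith [hx'd.le]⟩
      · have hae : a = 0 := max_eq_left (by linarith)
        refine ⟨i, hi1, hiΛ, x, hx, ?_, ?_⟩
        · rw [hae, hγ.1, dist_self]; linarith
        · rw [hae, hγ.1, dist_self]
          have := hSmaxdist x hxUm
          linarith
    have hv : ∃ k2 : ℕ, 1 ≤ k2 ∧ (k2 : ℕ∞) ≤ Λ ∧ ∃ y' ∈ Xs k2,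
        dist (γ b) y' ≤ S + 1 ∧ S - 1 + dist (γ b) y' ≤ dist (γ tstar) (γ b) := by
      rcases le_or_gt (tstar + 2 * S) d with hcb | hcb
      · have hbe : b = tstar + 2 * S := min_eq_right hcb
        have hdpv : dist (γ tstar) (γ b) = 2 * S := by
          rw [hγ.2.2 tstar htmem b hbIcc, hbe,
            show tstar - (tstar + 2 * S) = -(2 * S) by ring, abs_neg,
            abs_of_nonneg (by linarith)]
        have hfb : infDist (γ b) U < S + 1 := lt_of_le_of_lt (htmax b hbIcc) (by linarith)
        obtain ⟨y', hy'U, hy'd⟩ := (infDist_lt_iff hUne).mp hfb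
        obtain ⟨k2, hk21, hk2Λ, hk2m⟩ := hmemU' y' hy'U
        exact ⟨k2, hk21, hk2Λ, y', hk2m, hy'd.le, by rw [hdpv]; linarith [hy'd.le]⟩
      · have hbe : b = d := min_eq_left (by linarith)
        have hγd : γ b = y := by rw [hbe, hddef]; exact hγ.2.1
        refine ⟨j, hj1, hjΛ, y, hy, ?_, ?_⟩
        · rw [hγd, dist_self]; linarith
        · rw [hγd, dist_self]
          have := hSmaxdist y hyUm
          linarith
    obtain ⟨k1, hk11, hk1Λ, x', hx'm, hx'd, hx'marg⟩ := hu
    obtain ⟨k2, hk21, hk2Λ, y', hy'm, hy'd, hy'marg⟩ := hv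
    -- subgeodesic from γ a to γ b
    have hduv : dist (γ a) (γ b) = b - a := by
      rw [hγ.2.2 a haIcc b hbIcc, abs_sub_comm, abs_of_nonneg (by linarith : (0:ℝ) ≤ b - a)]
    have hγuv : IsGeodesicFrom (fun r => γ (a + r)) (γ a) (γ b) := by
      refine ⟨by simp, ?_, ?_⟩
      · show γ (a + dist (γ a) (γ b)) = γ b
        rw [hduv, show a + (b - a) = b by ring]
      · intro s1 hs1 t1 ht1
        rw [hduv] at hs1 ht1
        have h1 : a + s1 ∈ Set.Icc (0:ℝ) d :=
          ⟨by linarith [haIcc.1, hs1.1], by linarith [hbIcc.2, hs1.2]⟩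
        have h2 : a + t1 ∈ Set.Icc (0:ℝ) d :=
          ⟨by linarith [haIcc.1, ht1.1], by linarith [hbIcc.2, ht1.2]⟩
        show dist (γ (a + s1)) (γ (a + t1)) = |s1 - t1|
        rw [hγ.2.2 _ h1 _ h2, show a + s1 - (a + t1) = s1 - t1 by ring]
    have hpmem : γ tstar ∈ geodSeg (fun r => γ (a + r)) (γ a) (γ b) := by
      refine ⟨tstar - a, ?_, ?_⟩
      · rw [hduv]; exact ⟨by linarith, by linarith⟩
      · show γ (a + (tstar - a)) = γ tstar
        rw [show a + (tstar - a) = tstar by ring]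
    obtain ⟨α, hα⟩ := hgeo (γ a) x'
    obtain ⟨β, hβ⟩ := hgeo x' (γ b)
    obtain ⟨q₁, hq₁mem, hq₁d⟩ := hhyp' (γ a) x' (γ b) α β _ hα hβ hγuv (γ tstar) hpmem
    rcases hq₁mem with hq₁m | hq₁m
    · -- q₁ on [γ a, x'] : contradiction
      obtain ⟨r, hr, rfl⟩ := hq₁m
      have h1 : dist (α r) (γ a) = r := by
        have h0 := hα.2.2 r hr 0 ⟨le_refl 0, dist_nonneg⟩
        rw [hα.1] at h0
        rw [h0, sub_zero, abs_of_nonneg hr.1]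
      have h2 : dist (γ tstar) (γ a) ≤ δ' + dist (γ a) x' := by
        calc dist (γ tstar) (γ a) ≤ dist (γ tstar) (α r) + dist (α r) (γ a) :=
              dist_triangle _ _ _
          _ ≤ δ' + dist (γ a) x' := by rw [h1]; exact add_le_add hq₁d hr.2
      linarith
    · obtain ⟨μ, hμ⟩ := hgeo x' y'
      obtain ⟨ν, hν⟩ := hgeo y' (γ b)
      obtain ⟨q₂, hq₂mem, hq₂d⟩ := hhyp' x' y' (γ b) μ ν β hμ hν hβ q₁ hq₁m
      have hpq₂ : dist (γ tstar) q₂ ≤ 2 * δ' := by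
        calc dist (γ tstar) q₂ ≤ dist (γ tstar) q₁ + dist q₁ q₂ := dist_triangle _ _ _
          _ ≤ 2 * δ' := by linarith
      rcases hq₂mem with hq₂m | hq₂m
      · -- main case : q₂ on [x', y']
        have hxy' : dist x' y' ≤ 6 * S + 2 := by
          have e1 : dist x' (γ a) = dist (γ a) x' := dist_comm _ _
          have e2 : dist (γ b) y' = dist (γ b) y' := rfl
          calc dist x' y' ≤ dist x' (γ a) + dist (γ a) (γ b) + dist (γ b) y' :=
                dist_triangle4 _ _ _ _
            _ ≤ 6 * S + 2 := by rw [e1, hduv]; linarith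
        have hprogr := hprog k1 k2 hk11 hk1Λ hk21 hk2Λ x' hx'm y' hy'm
        set G : ℕ := max k1 k2 - min k1 k2 with hGdef
        have hGr : ((G : ℕ) : ℝ) = |(k1 : ℝ) - (k2 : ℝ)| := by
          rcases le_total k1 k2 with h | h
          · rw [hGdef, max_eq_right h, min_eq_left h, abs_sub_comm,
              abs_of_nonneg (sub_nonneg.mpr (by exact_mod_cast h))]
            push_cast [h]; ring
          · rw [hGdef, max_eq_left h, min_eq_right h,
              abs_of_nonneg (sub_nonneg.mpr (by exact_mod_cast h))]
            push_cast [h]; ring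
        have hmG : m * ((G : ℝ) - c) ≤ 6 * S + 2 := by
          rw [hGr]; linarith
        have hminmax1 : 1 ≤ min k1 k2 := le_min hk11 hk21
        have hminmaxΛ : ((max k1 k2 : ℕ) : ℕ∞) ≤ Λ := by
          rcases le_total k1 k2 with h | h
          · rw [max_eq_right h]; exact hk2Λ
          · rw [max_eq_left h]; exact hk1Λ
        have hcl := ChainAux.chainlog δ' ε hε.le hδ'0 hgeo hhyp' Λ Xs hX hcons G
          (min k1 k2) (max k1 k2) hminmax1 min_le_max hminmaxΛ (le_refl G)
        have hres : ∃ k : ℕ, 1 ≤ k ∧ (k : ℕ∞) ≤ Λ ∧ ∃ q ∈ Xs k,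
            dist q₂ q ≤ ε + δ' * ((Nat.log 2 (2 * G) : ℝ) + 1) := by
          rcases le_total k1 k2 with h | h
          · rw [min_eq_left h, max_eq_right h] at hcl
            exact hcl x' hx'm y' hy'm μ hμ q₂ hq₂m
          · rw [min_eq_right h, max_eq_left h] at hcl
            exact hcl y' hy'm x' hx'm _ (ChainAux.reverse_isGeodesic hμ) q₂
              (ChainAux.reverse_mem_seg hμ hq₂m)
        obtain ⟨k, hk1', hkΛ', q, hqX, hqd⟩ := hres
        have hSd : S ≤ dist (γ tstar) q := hSmaxdist q (hmemU k hk1' hkΛ' q hqX)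
        have hSbound : S ≤ 2 * δ' + ε + δ' * ((Nat.log 2 (2 * G) : ℝ) + 1) := by
          calc S ≤ dist (γ tstar) q := hSd
            _ ≤ dist (γ tstar) q₂ + dist q₂ q := dist_triangle _ _ _
            _ ≤ 2 * δ' + (ε + δ' * ((Nat.log 2 (2 * G) : ℝ) + 1)) := add_le_add hpq₂ hqd
            _ = 2 * δ' + ε + δ' * ((Nat.log 2 (2 * G) : ℝ) + 1) := by ring
        set L := Nat.log 2 (2 * G) with hLdef
        by_cases hG0 : G = 0
        · have hL0' : L = 0 := by rw [hLdef, hG0]; simp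
          rw [hL0'] at hSbound
          have hL0nn : (0:ℝ) ≤ δ' * (L0 : ℝ) := mul_nonneg hδ'0 (Nat.cast_nonneg _)
          rw [hCdef] at hSC
          push_cast at hSbound
          nlinarith [hSC, hSbound, hL0nn]
        · have hpow : (2:ℝ) ^ L ≤ 2 * (G : ℝ) := by
            have h2G := Nat.pow_log_le_self 2 (show 2 * G ≠ 0 by omega)
            rw [← hLdef] at h2G
            exact_mod_cast h2G
          have hfin : (2:ℝ) ^ L ≤ (12 * δ' / m) * L +
              (2 * c + 4 / m + (12 / m) * (2 * δ' + ε + δ')) := by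
            rw [← mul_le_mul_iff_right₀ hm]
            have e : m * ((12 * δ' / m) * L + (2 * c + 4 / m + (12 / m) * (2 * δ' + ε + δ')))
                = 12 * δ' * L + 2 * m * c + 4 + 12 * (2 * δ' + ε + δ') := by
              field_simp
              ring
            rw [e]
            have h1 : m * (2:ℝ) ^ L ≤ m * (2 * G) :=
              mul_le_mul_of_nonneg_left hpow hm.le
            have h2 : m * (2 * (G:ℝ)) ≤ 2 * m * c + 12 * S + 4 := by linarith [hmG]
            have h3 : 12 * S ≤ 12 * (2 * δ' + ε + δ' * ((L:ℝ) + 1)) := by linarith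
            linarith
          by_cases hLL : L0 ≤ L
          · have := hL0 L hLL
            linarith
          · push_neg at hLL
            have hLle : (L : ℝ) ≤ (L0 : ℝ) := by exact_mod_cast hLL.le
            have hmul : δ' * ((L:ℝ) + 1) ≤ δ' * ((L0:ℝ) + 1) :=
              mul_le_mul_of_nonneg_left (by linarith) hδ'0
            rw [hCdef] at hSC
            linarith
      · -- q₂ on [y', γ b] : contradiction
        obtain ⟨r, hr, rfl⟩ := hq₂m
        have h1 : dist (ν r) (γ b) = dist y' (γ b) - r := by
          have h0 := hν.2.2 r hr (dist y' (γ b)) ⟨dist_nonneg, le_refl _⟩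
          rw [hν.2.1] at h0
          rw [h0, abs_of_nonpos (by linarith [hr.2]), neg_sub]
        have h2 : dist (γ tstar) (γ b) ≤ 2 * δ' + dist (γ b) y' := by
          have h3 : dist (ν r) (γ b) ≤ dist (γ b) y' := by
            rw [h1, dist_comm y' (γ b)]; linarith [hr.1]
          calc dist (γ tstar) (γ b) ≤ dist (γ tstar) (ν r) + dist (ν r) (γ b) :=
                dist_triangle _ _ _
            _ ≤ 2 * δ' + dist (γ b) y' := add_le_add hpq₂ h3
        linarith
  obtain ⟨i, hi1, hiΛ, hx⟩ := hmemU' x₀ hxU₀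
  obtain ⟨j, hj1, hjΛ, hy⟩ := hmemU' y₀ hyU₀
  rcases le_total i j with h | h
  · exact key i j hi1 h hiΛ hjΛ x₀ hx y₀ hy γ₀ hγ₀ p₀ hp₀
  · exact key j i hj1 h hjΛ hiΛ y₀ hy x₀ hx _ (ChainAux.reverse_isGeodesic hγ₀) p₀
      (ChainAux.reverse_mem_seg hγ₀ hp₀)
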